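/- Monotonicity of the MBS threshold (Theorem 1, Property 2, second part): let V : 𝒬 → ℝ be monotone and let u* ∈ 𝒰 satisfy u*_0 = m for some content m ∈ M_0. If two partial states Q¹_{−0,−m} and Q²_{−0,−m} (coordinates of I other than (0,m)) satisfy Q¹_{n,m} ≥ Q²_{n,m} for every n ∈ N_m and agree on all other coordinates, then φ_{u*}⁻(Q¹_{−0,−m}) ≤ φ_{u*}⁻(Q²_{−0,−m}) (in {0,…,N_{0,m}} ∪ {+∞}); i.e., the MBS scheduling threshold φ_{u*}⁻(Q_{−0,−m}) is monotonically non-increasing in Q_{n,m} for every n ∈ N_m. -/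

import Mathlib

open Finset

namespace HetNet

/-- The queue index set `I = {(n,m) : 0 ≤ n ≤ N, m ∈ M_n}`. -/
abbrev Idx {N M : ℕ} (cache : Fin (N + 1) → Finset (Fin M)) : Type :=
  {p : Fin (N + 1) × Fin M // p.2 ∈ cache p.1}

/-- The feasible action space `𝒰`: each BS schedules a cached content or idles (`none`),
and the MBS (BS `0`) and the SBSs do not operate concurrently. -/
def Feasible {N M : ℕ} (cache : Fin (N + 1) → Finset (Fin M))
    (u : Fin (N + 1) → Option (Fin M)) : Prop :=
  (∀ n m, u n = some m → m ∈ cache n) ∧ (u 0 ≠ none → ∀ n, n ≠ 0 → u n = none)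

instance {N M : ℕ} (cache : Fin (N + 1) → Finset (Fin M)) :
    DecidablePred (Feasible cache) := by
  intro u; unfold Feasible; infer_instance

instance {N M : ℕ} (cache : Fin (N + 1) → Finset (Fin M)) :
    Nonempty {u : Fin (N + 1) → Option (Fin M) // Feasible cache u} :=
  ⟨⟨fun _ => none, ⟨fun _ _ h => (nomatch h), fun h => absurd rfl h⟩⟩⟩

/-- Queue `(n,m)` is served by action `u`. -/
def Served {N M : ℕ} (u : Fin (N + 1) → Option (Fin M)) (n : Fin (N + 1)) (m : Fin M) : Prop :=
  (n = 0 ∧ u 0 = some m) ∨ (n ≠ 0 ∧ (u 0 = some m ∨ u n = some m))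

instance {N M : ℕ} (u : Fin (N + 1) → Option (Fin M)) (n : Fin (N + 1)) (m : Fin M) :
    Decidable (Served u n m) := by unfold Served; infer_instance

/-- The queue transition map `T(Q,u,A)`. -/
def T {N M : ℕ} {cache : Fin (N + 1) → Finset (Fin M)} (bound : Idx cache → ℕ)
    (Q : Idx cache → ℕ) (u : Fin (N + 1) → Option (Fin M)) (A : Idx cache → ℕ) :
    Idx cache → ℕ := fun i =>
  if Served u i.val.1 i.val.2 then min (A i) (bound i) else min (Q i + A i) (bound i)

/-- The network power cost `p(u) = Σ_n p(n, u_n)` (with `p(n,0) = 0` for an idling BS). -/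
def pcost {N M : ℕ} (p : Fin (N + 1) → Fin M → ℝ) (u : Fin (N + 1) → Option (Fin M)) : ℝ :=
  ∑ n, (u n).elim 0 (p n)

/-- The sum request queue length `d(Q)`. -/
def dcost {N M : ℕ} {cache : Fin (N + 1) → Finset (Fin M)} (Q : Idx cache → ℕ) : ℝ :=
  ∑ i, (Q i : ℝ)

/-- The per-stage cost `g(Q,u) = d(Q) + w·p(u)`. -/
def gcost {N M : ℕ} (p : Fin (N + 1) → Fin M → ℝ) (w : ℝ)
    {cache : Fin (N + 1) → Finset (Fin M)}
    (Q : Idx cache → ℕ) (u : Fin (N + 1) → Option (Fin M)) : ℝ :=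
  dcost Q + w * pcost p u

/-- The state-action cost `J_V(Q,u) = g(Q,u) + Σ_{A∈𝒜} P(A)·V(T(Q,u,A))`. -/
def Jcost {N M : ℕ} (p : Fin (N + 1) → Fin M → ℝ) (w : ℝ)
    {cache : Fin (N + 1) → Finset (Fin M)} (bound : Idx cache → ℕ)
    {ι : Type} [Fintype ι] (P : ι → ℝ) (A : ι → Idx cache → ℕ)
    (V : (Idx cache → ℕ) → ℝ) (Q : Idx cache → ℕ)
    (u : Fin (N + 1) → Option (Fin M)) : ℝ :=
  gcost p w Q u + ∑ a, P a * V (T bound Q u (A a))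

open scoped Classical in
/-- `Φ_u(Q_{−n,−m})`: the set of queue lengths `q ∈ {0,…,N_{n,m}}` at coordinate `i = (n,m)`
such that action `u` dominates every other feasible action at the state obtained from `Q`
by replacing its `(n,m)`-coordinate with `q`.  Its `Finset.max` (valued in `WithBot ℕ`,
`⊥` = −∞) is `φ_u⁺(Q_{−n,−m})`, and its `Finset.min` (valued in `WithTop ℕ`, `⊤` = +∞)
is `φ_u⁻(Q_{−n,−m})`. -/
noncomputable def Phi {N M : ℕ} (p : Fin (N + 1) → Fin M → ℝ) (w : ℝ)
    {cache : Fin (N + 1) → Finset (Fin M)} (bound : Idx cache → ℕ)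
    {ι : Type} [Fintype ι] (P : ι → ℝ) (A : ι → Idx cache → ℕ)
    (V : (Idx cache → ℕ) → ℝ) (u : Fin (N + 1) → Option (Fin M))
    (i : Idx cache) (Q : Idx cache → ℕ) : Finset ℕ :=
  (Finset.range (bound i + 1)).filter fun q =>
    ∀ v, Feasible cache v → v ≠ u →
      Jcost p w bound P A V (Function.update Q i q) u -
        Jcost p w bound P A V (Function.update Q i q) v ≤ 0

/-- Theorem 1, Property 2, second part: monotonicity of the MBS threshold:
let `V` be monotone and `u* ∈ 𝒰` with `u*_0 = m ∈ M_0`.  If the partial states `Q¹_{−0,−m}`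
and `Q²_{−0,−m}` satisfy `Q¹_{n,m} ≥ Q²_{n,m}` for every `n ∈ N_m` and agree on all other
coordinates, then `φ_{u*}⁻(Q¹_{−0,−m}) ≤ φ_{u*}⁻(Q²_{−0,−m})` in `{0,…,N_{0,m}} ∪ {+∞}`. -/
theorem optimal_MBS_threshold_monotone {N M : ℕ} (cache : Fin (N + 1) → Finset (Fin M))
    (hcache0 : ∀ m : Fin M, m ∈ cache 0)
    (bound : Idx cache → ℕ)
    (p : Fin (N + 1) → Fin M → ℝ) (hp : ∀ n m, 0 ≤ p n m)
    (w : ℝ) (hw : 0 ≤ w)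
    {ι : Type} [Fintype ι] (P : ι → ℝ) (A : ι → Idx cache → ℕ)
    (hP : ∀ a, 0 ≤ P a) (hPsum : ∑ a, P a = 1)
    (V : (Idx cache → ℕ) → ℝ)
    (hV : ∀ Q₁ Q₂ : Idx cache → ℕ, (∀ i, Q₁ i ≤ bound i) → (∀ i, Q₂ i ≤ bound i) →
      (∀ i, Q₁ i ≤ Q₂ i) → V Q₁ ≤ V Q₂)
    (ustar : Fin (N + 1) → Option (Fin M)) (hustar : Feasible cache ustar)
    (m : Fin M) (hu0 : ustar 0 = some m)
    (Q₁ Q₂ : Idx cache → ℕ)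
    (hQ₁ : ∀ i, Q₁ i ≤ bound i) (hQ₂ : ∀ i, Q₂ i ≤ bound i)
    (hge : ∀ i : Idx cache, i.val.1 ≠ 0 → i.val.2 = m → Q₂ i ≤ Q₁ i)
    (heq : ∀ i : Idx cache, i.val ≠ ((0 : Fin (N + 1)), m) →
      ¬(i.val.1 ≠ 0 ∧ i.val.2 = m) → Q₁ i = Q₂ i) :
    (Phi p w bound P A V ustar ⟨((0 : Fin (N + 1)), m), hcache0 m⟩ Q₁).min ≤
      (Phi p w bound P A V ustar ⟨((0 : Fin (N + 1)), m), hcache0 m⟩ Q₂).min := by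
  set i0 : Idx cache := ⟨((0 : Fin (N + 1)), m), hcache0 m⟩ with hi0
  -- states obtained by replacing the (0,m) coordinate
  have hRle : ∀ q, ∀ i, Function.update Q₂ i0 q i ≤ Function.update Q₁ i0 q i := by
    intro q i
    by_cases h : i = i0
    · subst h; simp
    · rw [Function.update_of_ne h, Function.update_of_ne h]
      by_cases h2 : i.val.2 = m
      · by_cases h1 : i.val.1 = 0
        · exact le_of_eq (heq i (fun hc => h (Subtype.ext (by rw [Prod.ext_iff] at hc ⊢; exact hc)))
            (fun hc => hc.1 h1)).symm
        · exact hge i h1 h2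
      · exact le_of_eq (heq i (fun hc => h2 (by rw [hc])) (fun hc => h2 hc.2)).symm
  have hReq : ∀ q, ∀ i : Idx cache, ¬ Served ustar i.val.1 i.val.2 →
      Function.update Q₁ i0 q i = Function.update Q₂ i0 q i := by
    intro q i hns
    have h2 : i.val.2 ≠ m := by
      intro h2
      apply hns
      by_cases h1 : i.val.1 = 0
      · exact Or.inl ⟨h1, by rw [h2]; exact hu0⟩
      · exact Or.inr ⟨h1, Or.inl (by rw [h2]; exact hu0)⟩
    have h : i ≠ i0 := fun hc => h2 (by rw [hc])
    rw [Function.update_of_ne h, Function.update_of_ne h]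
    exact heq i (fun hc => h2 (by rw [hc])) (fun hc => h2 hc.2)
  have hTbd : ∀ (Q : Idx cache → ℕ) v a (i : Idx cache), T bound Q v (A a) i ≤ bound i := by
    intro Q v a i; unfold T; split <;> exact min_le_right _ _
  have key : ∀ q v, Feasible cache v →
      Jcost p w bound P A V (Function.update Q₁ i0 q) ustar -
        Jcost p w bound P A V (Function.update Q₁ i0 q) v ≤
      Jcost p w bound P A V (Function.update Q₂ i0 q) ustar -
        Jcost p w bound P A V (Function.update Q₂ i0 q) v := by
    intro q v hv
    have hTu : ∀ a, T bound (Function.update Q₁ i0 q) ustar (A a) =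
        T bound (Function.update Q₂ i0 q) ustar (A a) := by
      intro a; funext i; unfold T
      split
      · rfl
      · rw [hReq q i (by assumption)]
    have hTv : ∀ a, V (T bound (Function.update Q₂ i0 q) v (A a)) ≤
        V (T bound (Function.update Q₁ i0 q) v (A a)) := by
      intro a
      refine hV _ _ (hTbd _ v a) (hTbd _ v a) fun i => ?_
      unfold T; split
      · exact le_rfl
      · exact min_le_min (Nat.add_le_add_right (hRle q i) _) le_rfl
    have hsum2 : ∑ a, P a * V (T bound (Function.update Q₂ i0 q) v (A a)) ≤
        ∑ a, P a * V (T bound (Function.update Q₁ i0 q) v (A a)) :=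
      Finset.sum_le_sum fun a _ => mul_le_mul_of_nonneg_left (hTv a) (hP a)
    have hsum1 : ∑ a, P a * V (T bound (Function.update Q₁ i0 q) ustar (A a)) =
        ∑ a, P a * V (T bound (Function.update Q₂ i0 q) ustar (A a)) :=
      Finset.sum_congr rfl fun a _ => by rw [hTu a]
    unfold Jcost gcost
    linarith
  have hsub : Phi p w bound P A V ustar i0 Q₂ ⊆ Phi p w bound P A V ustar i0 Q₁ := by
    intro q hq
    simp only [Phi, Finset.mem_filter, Finset.mem_range] at hq ⊢
    exact ⟨hq.1, fun v hv hne => (key q v hv).trans (hq.2 v hv hne)⟩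
  exact Finset.min_mono hsub

end HetNet
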